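/- Let S ⊆ V be a seed set, extend π* to all of V by setting π*_i := 1 for i ∈ S, and for q ∈ [0,1] define the edge set E(q) := {(k, j) ∈ E : π*_k > π*_j and q ∉ [π*_k − 1 + p(k, j), π*_k]} ∪ {(k, j) ∈ E : π*_k ≤ π*_j and q ∈ (0, p(k, j)]}. Then, taking q̃ uniformly distributed on [0,1], the expected number of influenced nodes of the random scenario E(q̃) equals the worst-case expected influence: ∫_0^1 R(E(q), S) dq = |S| + Σ_{i ∈ V \ S} π*_i = f^corr(S). -/

import Mathlib

open scoped BigOperators

namespace CorrIM

variable {V : Type*} [Fintype V] [DecidableEq V]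

/-- A node `i` is influenced: `i ∈ S`, or `i` is reachable from some node of `S`
along the live edges of the scenario `c`. -/
def influenced (c : Finset (V × V)) (S : Finset V) (i : V) : Prop :=
  ∃ s ∈ S, Relation.ReflTransGen (fun a b : V => (a, b) ∈ c) s i

/-- `R c S` : the number of influenced nodes in scenario `c` with seed set `S`. -/
noncomputable def R (c : Finset (V × V)) (S : Finset V) : ℕ :=
  Set.ncard {i : V | influenced c S i}

/-- The Fréchet class `Θ` : probability distributions on scenarios (subsets of `E`)
whose marginals agree with the edge likelihoods `p`. -/
def memTheta (E : Finset (V × V)) (p : V × V → ℝ) (θ : Finset (V × V) → ℝ) : Prop :=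
  (∀ c, 0 ≤ θ c) ∧ (∀ c, θ c ≠ 0 → c ⊆ E) ∧ (∑ c : Finset (V × V), θ c) = 1 ∧
    ∀ e ∈ E, (∑ c : Finset (V × V), if e ∈ c then θ c else 0) = p e

/-- Expected number of influenced nodes under the distribution `θ`. -/
noncomputable def expInf (θ : Finset (V × V) → ℝ) (S : Finset V) : ℝ :=
  ∑ c : Finset (V × V), θ c * (R c S : ℝ)

/-- The correlation robust influence function `f^corr`. -/
noncomputable def fcorr (E : Finset (V × V)) (p : V × V → ℝ) (S : Finset V) : ℝ :=
  sInf {x : ℝ | ∃ θ, memTheta E p θ ∧ x = expInf θ S}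

open Classical in
/-- Probability of the event `A` under the distribution `θ`. -/
noncomputable def prob (θ : Finset (V × V) → ℝ) (A : Finset (V × V) → Prop) : ℝ :=
  ∑ c : Finset (V × V), if A c then θ c else 0

/-- `γ` (a list of nodes `i₀, i₁, …, i_λ`, `λ ≥ 1`) is a directed path from the
seed set `S` to the node `i` using edges of `E`. -/
def IsPathFrom (E : Finset (V × V)) (S : Finset V) (i : V) (γ : List V) : Prop :=
  2 ≤ γ.length ∧ (∃ s ∈ S, γ.head? = some s) ∧ γ.getLast? = some i ∧
    γ.Chain' (fun a b : V => (a, b) ∈ E)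

/-- The list of edges `(i₀,i₁), …, (i_{λ-1}, i_λ)` of a path `γ = [i₀, …, i_λ]`. -/
def pathEdges (γ : List V) : List (V × V) := γ.zip γ.tail

/-- The weight `L(γ) = 1 - ∑_{l=1}^{λ} (1 - p(i_{l-1}, i_l))` of a path. -/
noncomputable def L (p : V × V → ℝ) (γ : List V) : ℝ :=
  1 - ((pathEdges γ).map (fun e => 1 - p e)).sum

/-- `π*_i = max(0, max_{γ ∈ Γ(S,i)} L(γ))`, with value `0` when `Γ(S,i) = ∅`. -/
noncomputable def piStar (E : Finset (V × V)) (p : V × V → ℝ) (S : Finset V) (i : V) : ℝ :=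
  sSup (insert 0 {x : ℝ | ∃ γ : List V, IsPathFrom E S i γ ∧ x = L p γ})

/-- The independent cascade distribution `θ_ic` : each edge of `E` is live
independently with probability `p e`. -/
noncomputable def thetaIC (E : Finset (V × V)) (p : V × V → ℝ) (c : Finset (V × V)) : ℝ :=
  if c ⊆ E then (∏ e ∈ c, p e) * ∏ e ∈ E \ c, (1 - p e) else 0

/-- The independent cascade influence function `f^ic`. -/
noncomputable def fic (E : Finset (V × V)) (p : V × V → ℝ) (S : Finset V) : ℝ :=
  expInf (thetaIC E p) S


/-- `π*` extended to all of `V` by setting `π*_i := 1` for `i ∈ S`. -/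
noncomputable def extPi (E : Finset (V × V)) (p : V × V → ℝ) (S : Finset V) (i : V) : ℝ :=
  if i ∈ S then 1 else piStar E p S i

open Classical in
/-- The scenario `E(q)` of live edges determined by the single random number `q`:
`E(q) = {(k,j) ∈ E : π*_k > π*_j, q ∉ [π*_k - 1 + p(k,j), π*_k]}
      ∪ {(k,j) ∈ E : π*_k ≤ π*_j, q ∈ (0, p(k,j)]}`. -/
noncomputable def liveEdges (E : Finset (V × V)) (p : V × V → ℝ) (S : Finset V)
    (q : ℝ) : Finset (V × V) :=
  E.filter (fun e =>
    (extPi E p S e.2 < extPi E p S e.1 ∧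
      ¬(extPi E p S e.1 - 1 + p e ≤ q ∧ q ≤ extPi E p S e.1)) ∨
    (extPi E p S e.1 ≤ extPi E p S e.2 ∧ 0 < q ∧ q ≤ p e))

set_option linter.unusedSectionVars false

-- ### basic path lemmas

lemma pathEdges_cons (a b : V) (t : List V) :
    pathEdges (a :: b :: t) = (a, b) :: pathEdges (b :: t) := rfl

lemma chain'_pathEdges {R' : V → V → Prop} :
    ∀ {γ : List V}, γ.Chain' R' → ∀ e ∈ pathEdges γ, R' e.1 e.2
  | [], _, e, he => by simp [pathEdges] at he
  | [a], _, e, he => by simp [pathEdges] at he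
  | a :: b :: t, h, e, he => by
      rw [pathEdges_cons] at he
      rcases List.mem_cons.1 he with rfl | he
      · exact (List.isChain_cons_cons.1 h).1
      · exact chain'_pathEdges (List.isChain_cons_cons.1 h).2 e he

section
variable (E : Finset (V × V)) (p : V × V → ℝ) (S : Finset V)

lemma edgeSum_nonneg (hp : ∀ e ∈ E, 0 ≤ p e ∧ p e ≤ 1) {γ : List V}
    (hc : γ.Chain' (fun a b : V => (a, b) ∈ E)) :
    0 ≤ ((pathEdges γ).map (fun e => 1 - p e)).sum := by
  apply List.sum_nonneg
  intro x hx
  obtain ⟨e, he, rfl⟩ := List.mem_map.1 hx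
  have := chain'_pathEdges hc e he
  have := (hp (e.1, e.2) this).2
  simp only [Prod.mk.eta] at this
  linarith

lemma L_le_one (hp : ∀ e ∈ E, 0 ≤ p e ∧ p e ≤ 1) {γ : List V}
    (hc : γ.Chain' (fun a b : V => (a, b) ∈ E)) : L p γ ≤ 1 := by
  have := edgeSum_nonneg E p hp hc
  simp only [L]; linarith

lemma bddAbove_Lset (hp : ∀ e ∈ E, 0 ≤ p e ∧ p e ≤ 1) (i : V) :
    BddAbove (insert (0:ℝ) {x : ℝ | ∃ γ : List V, IsPathFrom E S i γ ∧ x = L p γ}) := by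
  refine ⟨1, ?_⟩
  rintro x (rfl | ⟨γ, hγ, rfl⟩)
  · norm_num
  · exact L_le_one E p hp hγ.2.2.2

lemma piStar_nonneg (hp : ∀ e ∈ E, 0 ≤ p e ∧ p e ≤ 1) (i : V) : 0 ≤ piStar E p S i :=
  le_csSup (bddAbove_Lset E p S hp i) (Set.mem_insert _ _)

lemma piStar_le_one (hp : ∀ e ∈ E, 0 ≤ p e ∧ p e ≤ 1) (i : V) : piStar E p S i ≤ 1 := by
  apply csSup_le ⟨0, Set.mem_insert _ _⟩
  rintro x (rfl | ⟨γ, hγ, rfl⟩)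
  · norm_num
  · exact L_le_one E p hp hγ.2.2.2

lemma extPi_nonneg (hp : ∀ e ∈ E, 0 ≤ p e ∧ p e ≤ 1) (i : V) : 0 ≤ extPi E p S i := by
  unfold extPi; split
  · norm_num
  · exact piStar_nonneg E p S hp i

lemma extPi_le_one (hp : ∀ e ∈ E, 0 ≤ p e ∧ p e ≤ 1) (i : V) : extPi E p S i ≤ 1 := by
  unfold extPi; split
  · norm_num
  · exact piStar_le_one E p S hp i

lemma piStar_le_extPi (hp : ∀ e ∈ E, 0 ≤ p e ∧ p e ≤ 1) (i : V) :
    piStar E p S i ≤ extPi E p S i := by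
  unfold extPi; split
  · exact piStar_le_one E p S hp i
  · exact le_rfl

end

lemma pathEdges_concat : ∀ (γ : List V) (k j : V), γ.getLast? = some k →
    pathEdges (γ ++ [j]) = pathEdges γ ++ [(k, j)]
  | [], k, j, h => by simp at h
  | [a], k, j, h => by
      simp only [List.getLast?_singleton, Option.some.injEq] at h
      subst h; rfl
  | a :: b :: t, k, j, h => by
      rw [List.getLast?_cons_cons] at h
      have := pathEdges_concat (b :: t) k j h
      show pathEdges (a :: b :: (t ++ [j])) = _
      rw [pathEdges_cons, pathEdges_cons]
      simp only [List.cons_append] at this ⊢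
      rw [this]

lemma L_concat (p : V × V → ℝ) (γ : List V) (k j : V) (h : γ.getLast? = some k) :
    L p (γ ++ [j]) = L p γ - (1 - p (k, j)) := by
  unfold L
  rw [pathEdges_concat γ k j h, List.map_append, List.sum_append]
  simp; ring

lemma IsPathFrom_concat {E : Finset (V × V)} {S : Finset V} {k j : V} {γ : List V}
    (h : IsPathFrom E S k γ) (he : (k, j) ∈ E) : IsPathFrom E S j (γ ++ [j]) := by
  obtain ⟨hl, ⟨s, hs, hhead⟩, hlast, hchain⟩ := h
  refine ⟨?_, ⟨s, hs, ?_⟩, ?_, ?_⟩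
  · rw [List.length_append]; simp; omega
  · rcases γ with _ | ⟨x, t⟩
    · simp at hhead
    · simpa using hhead
  · exact List.getLast?_concat
  · show List.IsChain _ _
    rw [List.isChain_append]
    refine ⟨hchain, List.isChain_singleton _, ?_⟩
    intro x hx y hy
    rw [hlast] at hx
    simp at hx hy
    subst hx; subst hy; exact he


section
variable (E : Finset (V × V)) (p : V × V → ℝ) (S : Finset V)

/-- Key relaxation inequality K1. -/
lemma extPi_sub_le (hp : ∀ e ∈ E, 0 ≤ p e ∧ p e ≤ 1) {k j : V} (he : (k, j) ∈ E) :
    extPi E p S k - (1 - p (k, j)) ≤ piStar E p S j := by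
  have hp1 : p (k, j) ≤ 1 := (hp _ he).2
  have hp0 : 0 ≤ p (k, j) := (hp _ he).1
  by_cases hk : k ∈ S
  · have hpath : IsPathFrom E S j [k, j] := by
      refine ⟨by simp, ⟨k, hk, rfl⟩, by simp, ?_⟩
      exact List.isChain_cons_cons.2 ⟨he, List.isChain_singleton _⟩
    have hL : L p [k, j] = p (k, j) := by
      simp [L, pathEdges]
    have : L p [k, j] ≤ piStar E p S j :=
      le_csSup (bddAbove_Lset E p S hp j) (Set.mem_insert_of_mem _ ⟨[k, j], hpath, rfl⟩)
    rw [hL] at this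
    rw [extPi, if_pos hk]
    linarith
  · rw [extPi, if_neg hk]
    have : piStar E p S k ≤ piStar E p S j + (1 - p (k, j)) := by
      apply csSup_le ⟨0, Set.mem_insert _ _⟩
      rintro x (rfl | ⟨γ, hγ, rfl⟩)
      · have := piStar_nonneg E p S hp j; linarith
      · have hpath := IsPathFrom_concat hγ he
        have hL := L_concat p γ k j hγ.2.2.1
        have : L p (γ ++ [j]) ≤ piStar E p S j :=
          le_csSup (bddAbove_Lset E p S hp j) (Set.mem_insert_of_mem _ ⟨γ ++ [j], hpath, rfl⟩)
        linarith
    linarith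

/-- K2: existence of a path of weight `> x` below `piStar`. -/
lemma exists_path_of_lt_piStar {i : V} {x : ℝ} (hx0 : 0 ≤ x)
    (hx : x < piStar E p S i) :
    ∃ γ : List V, IsPathFrom E S i γ ∧ x < L p γ := by
  obtain ⟨y, hy, hxy⟩ := exists_lt_of_lt_csSup ⟨0, Set.mem_insert _ _⟩ hx
  rcases hy with rfl | ⟨γ, hγ, rfl⟩
  · linarith
  · exact ⟨γ, hγ, hxy⟩

end

section Char
variable {E : Finset (V × V)} {p : V × V → ℝ} {S : Finset V}

lemma influenced_of_mem_seed {i : V} (hi : i ∈ S) (w : Finset (V × V)) :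
    influenced w S i := ⟨i, hi, Relation.ReflTransGen.refl⟩

lemma influenced_step {w : Finset (V × V)} {a b : V} (ha : influenced w S a)
    (hab : (a, b) ∈ w) : influenced w S b := by
  obtain ⟨s, hs, hr⟩ := ha
  exact ⟨s, hs, hr.tail hab⟩

/-- Forward walk lemma: reach the end of a path whose residual weight exceeds `q`. -/
lemma influenced_of_walk (hp : ∀ e ∈ E, 0 ≤ p e ∧ p e ≤ 1) {w : Finset (V × V)} {q : ℝ}
    (hq0 : 0 < q)
    (Hlive : ∀ e ∈ E, q < extPi E p S e.1 - 1 + p e → e ∈ w) :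
    ∀ (γ : List V) (k i : V), γ.Chain' (fun a b : V => (a, b) ∈ E) →
      γ.head? = some k → γ.getLast? = some i → influenced w S k →
      q < extPi E p S k - ((pathEdges γ).map (fun e => 1 - p e)).sum →
      influenced w S i
  | [], k, i, _, hh, _, _, _ => by simp at hh
  | [a], k, i, _, hh, hl, hk, _ => by
      simp at hh hl; subst hh; subst hl; exact hk
  | a :: b :: t, k, i, hchain, hh, hl, hk, hq => by
      have hh' : k = a := by simpa using hh.symm
      subst hh'
      obtain ⟨he, hchain'⟩ := List.isChain_cons_cons.1 hchain
      have hrest : 0 ≤ ((pathEdges (b :: t)).map (fun e => 1 - p e)).sum :=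
        edgeSum_nonneg E p hp hchain'
      rw [pathEdges_cons, List.map_cons, List.sum_cons] at hq
      have hlive : (k, b) ∈ w := Hlive (k, b) he (by simp only; linarith)
      have hb : influenced w S b := influenced_step hk hlive
      have hKb : extPi E p S k - (1 - p (k, b)) ≤ extPi E p S b :=
        le_trans (extPi_sub_le E p S hp he) (piStar_le_extPi E p S hp b)
      exact influenced_of_walk hp hq0 Hlive (b :: t) b i hchain' rfl
        (by rw [← hl]; exact (List.getLast?_cons_cons ..).symm) hb (by linarith)

lemma influenced_of_lt_piStar (hp : ∀ e ∈ E, 0 ≤ p e ∧ p e ≤ 1) {w : Finset (V × V)} {q : ℝ}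
    (hq0 : 0 < q)
    (Hlive : ∀ e ∈ E, q < extPi E p S e.1 - 1 + p e → e ∈ w)
    {i : V} (hq : q < piStar E p S i) : influenced w S i := by
  obtain ⟨γ, hγ, hL⟩ := exists_path_of_lt_piStar E p S (le_of_lt hq0) hq
  obtain ⟨hlen, ⟨s, hs, hhead⟩, hlast, hchain⟩ := hγ
  have hse : extPi E p S s = 1 := by rw [extPi, if_pos hs]
  refine influenced_of_walk hp hq0 Hlive γ s i hchain hhead hlast
    (influenced_of_mem_seed hs w) ?_
  rw [hse]
  simpa [L] using hL

lemma le_extPi_of_influenced {w : Finset (V × V)} {q : ℝ}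
    (hq1 : q ≤ 1) (Hsub : w ⊆ E)
    (Hdead : ∀ e ∈ w, q ≤ extPi E p S e.1 → q ≤ extPi E p S e.2)
    {i : V} (h : influenced w S i) : q ≤ extPi E p S i := by
  obtain ⟨s, hs, hr⟩ := h
  induction hr with
  | refl => rw [extPi, if_pos hs]; exact hq1
  | @tail b c hab hbc ih => exact Hdead (b, c) hbc ih

end Char

open Classical in
lemma R_eq_sum (w : Finset (V × V)) (S : Finset V) :
    (R w S : ℝ) = ∑ i : V, if influenced w S i then (1 : ℝ) else 0 := by
  rw [Finset.sum_boole, R]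
  congr 1
  rw [show {i : V | influenced w S i} = ↑(Finset.univ.filter (fun i => influenced w S i)) by
    ext i; simp]
  rw [Set.ncard_coe_finset]

section Char2
variable {E : Finset (V × V)} {p : V × V → ℝ} {S : Finset V}

open Classical in
lemma R_formula (hp : ∀ e ∈ E, 0 ≤ p e ∧ p e ≤ 1) {w : Finset (V × V)} {q : ℝ}
    (hq0 : 0 < q) (hq1 : q ≤ 1) (Hsub : w ⊆ E)
    (Hlive : ∀ e ∈ E, q < extPi E p S e.1 - 1 + p e → e ∈ w)
    (Hdead : ∀ e ∈ w, q ≤ extPi E p S e.1 → q ≤ extPi E p S e.2)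
    (hne : ∀ i : V, q ≠ piStar E p S i) :
    (R w S : ℝ) = (S.card : ℝ) +
      ∑ i ∈ Finset.univ \ S, (if q < piStar E p S i then (1 : ℝ) else 0) := by
  rw [R_eq_sum]
  rw [← Finset.sum_sdiff (Finset.subset_univ S), add_comm]
  congr 1
  · rw [Finset.sum_congr rfl (fun i hi => if_pos (influenced_of_mem_seed hi w))]
    simp
  · apply Finset.sum_congr rfl
    intro i hi
    have hiS : i ∉ S := (Finset.mem_sdiff.1 hi).2
    congr 1
    apply propext
    constructor
    · intro h
      have := le_extPi_of_influenced hq1 Hsub Hdead h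
      rw [extPi, if_neg hiS] at this
      exact lt_of_le_of_ne this (hne i)
    · intro h
      exact influenced_of_lt_piStar hp hq0 Hlive h

end Char2

open MeasureTheory in
lemma integral_R {E : Finset (V × V)} {p : V × V → ℝ} {S : Finset V}
    (hp : ∀ e ∈ E, 0 ≤ p e ∧ p e ≤ 1) {w : ℝ → Finset (V × V)}
    (Hsub : ∀ q, w q ⊆ E)
    (Hlive : ∀ q, 0 < q → ∀ e ∈ E, q < extPi E p S e.1 - 1 + p e → e ∈ w q)
    (Hdead : ∀ q, 0 < q → ∀ e ∈ w q, q ≤ extPi E p S e.1 → q ≤ extPi E p S e.2) :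
    (∫ q in Set.Ioc (0:ℝ) 1, (R (w q) S : ℝ))
      = (S.card : ℝ) + ∑ i ∈ Finset.univ \ S, piStar E p S i := by
  classical
  set g : ℝ → ℝ := fun q => (S.card : ℝ) +
    ∑ i ∈ Finset.univ \ S, (Set.Ioo (0:ℝ) (piStar E p S i)).indicator (fun _ => (1:ℝ)) q
    with hg
  have hae : (fun q => (R (w q) S : ℝ)) =ᵐ[volume.restrict (Set.Ioc (0:ℝ) 1)] g := by
    have h1 : ∀ᵐ q ∂(volume.restrict (Set.Ioc (0:ℝ) 1)),
        q ∉ Set.range (piStar E p S) := by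
      apply ae_restrict_of_ae
      rw [ae_iff]
      have h0 : volume (Set.range (piStar E p S)) = 0 :=
        (Set.finite_range _).measure_zero _
      simpa only [not_not, Set.setOf_mem_eq] using h0
    have h2 : ∀ᵐ q ∂(volume.restrict (Set.Ioc (0:ℝ) 1)), q ∈ Set.Ioc (0:ℝ) 1 :=
      ae_restrict_mem measurableSet_Ioc
    filter_upwards [h1, h2] with q hq1 hq2
    have hq0 : (0:ℝ) < q := hq2.1
    have hne : ∀ i, q ≠ piStar E p S i := fun i h => hq1 ⟨i, h.symm⟩
    rw [R_formula hp hq0 hq2.2 (Hsub q) (Hlive q hq0) (Hdead q hq0) hne, hg]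
    simp only
    congr 1
    apply Finset.sum_congr rfl
    intro i _
    rw [Set.indicator_apply]
    by_cases h : q < piStar E p S i <;> simp [Set.mem_Ioo, hq0, h]
  rw [MeasureTheory.integral_congr_ae hae, hg]
  have hint : ∀ i ∈ Finset.univ \ S,
      Integrable ((Set.Ioo (0:ℝ) (piStar E p S i)).indicator (fun _ => (1:ℝ)))
        (volume.restrict (Set.Ioc (0:ℝ) 1)) :=
    fun i _ => (integrable_const 1).indicator measurableSet_Ioo
  rw [integral_add (integrable_const _) (integrable_finset_sum _ hint),
    integral_finset_sum _ hint]
  congr 1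
  · simp [Real.volume_Ioc]
  · apply Finset.sum_congr rfl
    intro i _
    rw [setIntegral_indicator measurableSet_Ioo]
    have hsub : Set.Ioc (0:ℝ) 1 ∩ Set.Ioo 0 (piStar E p S i) = Set.Ioo 0 (piStar E p S i) :=
      Set.inter_eq_right.2 (fun x hx => ⟨hx.1, le_trans (le_of_lt hx.2) (piStar_le_one E p S hp i)⟩)
    rw [hsub]
    simp [Real.volume_Ioo, ENNReal.toReal_ofReal (piStar_nonneg E p S hp i), piStar_nonneg E p S hp i]

section Verify
variable {E : Finset (V × V)} {p : V × V → ℝ} {S : Finset V}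

lemma liveEdges_sub (q : ℝ) : liveEdges E p S q ⊆ E := Finset.filter_subset _ _

lemma liveEdges_Hlive (hp : ∀ e ∈ E, 0 ≤ p e ∧ p e ≤ 1) (q : ℝ) (hq0 : 0 < q) :
    ∀ e ∈ E, q < extPi E p S e.1 - 1 + p e → e ∈ liveEdges E p S q := by
  intro e he hq
  rw [liveEdges, Finset.mem_filter]
  refine ⟨he, ?_⟩
  rcases lt_or_ge (extPi E p S e.2) (extPi E p S e.1) with h | h
  · exact Or.inl ⟨h, fun hc => absurd hq (not_lt.2 hc.1)⟩
  · refine Or.inr ⟨h, hq0, ?_⟩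
    have := extPi_le_one E p S hp e.1
    linarith
  
lemma liveEdges_Hdead (hp : ∀ e ∈ E, 0 ≤ p e ∧ p e ≤ 1) (q : ℝ) (hq0 : 0 < q) :
    ∀ e ∈ liveEdges E p S q, q ≤ extPi E p S e.1 → q ≤ extPi E p S e.2 := by
  intro e he hq
  rw [liveEdges, Finset.mem_filter] at he
  rcases he.2 with ⟨hlt, hblock⟩ | ⟨hle, _, _⟩
  · have h1 : q < extPi E p S e.1 - 1 + p e := by
      by_contra hc
      exact hblock ⟨not_lt.1 hc, hq⟩
    have h2 := extPi_sub_le E p S hp (show (e.1, e.2) ∈ E from by simpa using he.1)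
    have h3 := piStar_le_extPi E p S hp e.2
    simp only [Prod.mk.eta] at h2
    linarith
  · linarith

/-- Lower endpoint of the blocking interval for the modified scenario map. -/
noncomputable def blockLo (E : Finset (V × V)) (p : V × V → ℝ) (S : Finset V)
    (e : V × V) : ℝ := max 0 (extPi E p S e.1 - 1 + p e)

open Classical in
/-- Marginal-correct scenario map: edge `e` is live iff `q` avoids the blocking
interval `[blockLo e, blockLo e + (1 - p e)]`. -/
noncomputable def live2 (E : Finset (V × V)) (p : V × V → ℝ) (S : Finset V)
    (q : ℝ) : Finset (V × V) :=
  E.filter (fun e => ¬(blockLo E p S e ≤ q ∧ q ≤ blockLo E p S e + (1 - p e)))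

lemma live2_sub (q : ℝ) : live2 E p S q ⊆ E := Finset.filter_subset _ _

lemma live2_Hlive (q : ℝ) :
    ∀ e ∈ E, q < extPi E p S e.1 - 1 + p e → e ∈ live2 E p S q := by
  intro e he hq
  rw [live2, Finset.mem_filter]
  refine ⟨he, fun hc => ?_⟩
  have : extPi E p S e.1 - 1 + p e ≤ blockLo E p S e := le_max_right _ _
  linarith [hc.1]

lemma live2_Hdead (hp : ∀ e ∈ E, 0 ≤ p e ∧ p e ≤ 1) (q : ℝ) (hq0 : 0 < q) :
    ∀ e ∈ live2 E p S q, q ≤ extPi E p S e.1 → q ≤ extPi E p S e.2 := by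
  intro e he hq
  rw [live2, Finset.mem_filter] at he
  have hA : extPi E p S e.1 - 1 + p e ≤ blockLo E p S e := le_max_right _ _
  have hup : q ≤ blockLo E p S e + (1 - p e) := by linarith
  have hlow : q < blockLo E p S e := by
    by_contra hc
    exact he.2 ⟨not_lt.1 hc, hup⟩
  have hpos : 0 < blockLo E p S e := lt_trans hq0 hlow
  have hBeq : blockLo E p S e = extPi E p S e.1 - 1 + p e := by
    rw [blockLo, max_eq_right]
    by_contra hc
    rw [blockLo, max_eq_left (by linarith [le_of_not_ge hc])] at hpos
    exact lt_irrefl _ hpos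
  have h2 := extPi_sub_le E p S hp (show (e.1, e.2) ∈ E from by simpa using he.1)
  have h3 := piStar_le_extPi E p S hp e.2
  simp only [Prod.mk.eta] at h2
  rw [hBeq] at hlow
  linarith

end Verify

section Theta
variable (E : Finset (V × V)) (p : V × V → ℝ) (S : Finset V)

/-- The event (in `q`-space) that the modified scenario equals `c`. -/
def Aset (c : Finset (V × V)) : Set ℝ :=
  Set.Ioc (0:ℝ) 1 ∩ {q : ℝ | live2 E p S q = c}

/-- The worst-case distribution: push-forward of the uniform distribution on `[0,1]`
under the scenario map `live2`. -/
noncomputable def thetaStar (c : Finset (V × V)) : ℝ :=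
  (MeasureTheory.volume (Aset E p S c)).toReal

variable {E p S}

lemma liveSet_eq {e : V × V} (he : e ∈ E) :
    {q : ℝ | e ∈ live2 E p S q} =
      (Set.Icc (blockLo E p S e) (blockLo E p S e + (1 - p e)))ᶜ := by
  ext q
  simp [live2, Finset.mem_filter, he, Set.mem_Icc]

lemma measurable_liveSet (e : V × V) : MeasurableSet {q : ℝ | e ∈ live2 E p S q} := by
  by_cases he : e ∈ E
  · rw [liveSet_eq he]; exact measurableSet_Icc.compl
  · have : {q : ℝ | e ∈ live2 E p S q} = ∅ := by
      ext q
      simp only [Set.mem_setOf_eq, Set.mem_empty_iff_false, iff_false]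
      intro hq
      exact he (live2_sub q hq)
    rw [this]; exact MeasurableSet.empty

lemma measurable_Aset (c : Finset (V × V)) : MeasurableSet (Aset E p S c) := by
  apply measurableSet_Ioc.inter
  have : {q : ℝ | live2 E p S q = c} =
      ⋂ e : V × V, {q : ℝ | e ∈ live2 E p S q ↔ e ∈ c} := by
    ext q
    simp only [Set.mem_setOf_eq, Set.mem_iInter, Finset.ext_iff]
  rw [this]
  apply MeasurableSet.iInter
  intro e
  by_cases hc : e ∈ c
  · have : {q : ℝ | e ∈ live2 E p S q ↔ e ∈ c} = {q : ℝ | e ∈ live2 E p S q} := by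
      ext q; simp [hc]
    rw [this]; exact measurable_liveSet e
  · have : {q : ℝ | e ∈ live2 E p S q ↔ e ∈ c} = {q : ℝ | e ∈ live2 E p S q}ᶜ := by
      ext q; simp [hc]
    rw [this]; exact (measurable_liveSet e).compl

lemma Aset_subset (c : Finset (V × V)) : Aset E p S c ⊆ Set.Ioc (0:ℝ) 1 :=
  Set.inter_subset_left

lemma Aset_disjoint : ∀ c₁ ∈ (Finset.univ : Finset (Finset (V × V))),
    ∀ c₂ ∈ (Finset.univ : Finset (Finset (V × V))), c₁ ≠ c₂ →
    Disjoint (Aset E p S c₁) (Aset E p S c₂) := by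
  intro c₁ _ c₂ _ hne
  rw [Set.disjoint_left]
  rintro q ⟨_, h1⟩ ⟨_, h2⟩
  exact hne (h1 ▸ h2 ▸ rfl)

lemma Aset_biUnion_filter (P : Finset (V × V) → Prop) [DecidablePred P] :
    ⋃ c ∈ Finset.univ.filter P, Aset E p S c
      = Set.Ioc (0:ℝ) 1 ∩ {q : ℝ | P (live2 E p S q)} := by
  ext q
  simp only [Set.mem_iUnion, Finset.mem_filter, Finset.mem_univ, true_and, Aset,
    Set.mem_inter_iff, Set.mem_setOf_eq]
  constructor
  · rintro ⟨c, hP, hq, rfl⟩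
    exact ⟨hq, hP⟩
  · rintro ⟨hq, hP⟩
    exact ⟨live2 E p S q, hP, hq, rfl⟩

lemma volume_Aset_ne_top (c : Finset (V × V)) :
    MeasureTheory.volume (Aset E p S c) ≠ ⊤ := by
  apply ne_top_of_le_ne_top _ (MeasureTheory.measure_mono (Aset_subset c))
  rw [Real.volume_Ioc]
  exact ENNReal.ofReal_ne_top

end Theta

section Theta2
variable {E : Finset (V × V)} {p : V × V → ℝ} {S : Finset V}
open MeasureTheory

lemma sum_thetaStar_filter (P : Finset (V × V) → Prop) [DecidablePred P] :
    ∑ c ∈ Finset.univ.filter P, thetaStar E p S c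
      = (volume (Set.Ioc (0:ℝ) 1 ∩ {q : ℝ | P (live2 E p S q)})).toReal := by
  rw [← Aset_biUnion_filter P,
    measure_biUnion_finset (fun c₁ h₁ c₂ h₂ hne => Aset_disjoint c₁ (Finset.mem_univ c₁)
      c₂ (Finset.mem_univ c₂) hne) (fun c _ => measurable_Aset c)]
  rw [ENNReal.toReal_sum (fun c _ => volume_Aset_ne_top c)]
  simp [thetaStar]

lemma sum_thetaStar : ∑ c : Finset (V × V), thetaStar E p S c = 1 := by
  classical
  have h := sum_thetaStar_filter (E := E) (p := p) (S := S) (fun _ => True)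
  simp only [Finset.filter_true, Set.setOf_true, Set.inter_univ] at h
  rw [h, Real.volume_Ioc]
  norm_num

lemma volume_live_inter {A pe : ℝ} (hA0 : 0 ≤ A) (hB1 : A + (1 - pe) ≤ 1)
    (hp0 : 0 ≤ pe) (hp1 : pe ≤ 1) :
    (volume (Set.Ioc (0:ℝ) 1 ∩ (Set.Icc A (A + (1 - pe)))ᶜ)).toReal = pe := by
  set B := A + (1 - pe) with hB
  have hAB : A ≤ B := by rw [hB]; linarith
  have hIcc : volume (Set.Icc A B ∩ Set.Ioc (0:ℝ) 1) = ENNReal.ofReal (B - A) := by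
    apply le_antisymm
    · calc volume (Set.Icc A B ∩ Set.Ioc (0:ℝ) 1) ≤ volume (Set.Icc A B) :=
            measure_mono Set.inter_subset_left
        _ = ENNReal.ofReal (B - A) := Real.volume_Icc
    · calc ENNReal.ofReal (B - A) = volume (Set.Ioc A B) := Real.volume_Ioc.symm
        _ ≤ volume (Set.Icc A B ∩ Set.Ioc (0:ℝ) 1) := by
            apply measure_mono
            intro x hx
            exact ⟨⟨le_of_lt hx.1, hx.2⟩, ⟨lt_of_le_of_lt hA0 hx.1, le_trans hx.2 hB1⟩⟩
  have hdiff : Set.Ioc (0:ℝ) 1 ∩ (Set.Icc A B)ᶜ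
      = Set.Ioc (0:ℝ) 1 \ (Set.Icc A B ∩ Set.Ioc (0:ℝ) 1) := by
    ext x
    simp only [Set.mem_inter_iff, Set.mem_compl_iff, Set.mem_diff]
    tauto
  rw [hdiff, measure_diff Set.inter_subset_right
    ((measurableSet_Icc.inter measurableSet_Ioc).nullMeasurableSet)
    (by rw [hIcc]; exact ENNReal.ofReal_ne_top), hIcc, Real.volume_Ioc]
  rw [← ENNReal.ofReal_sub _ (by linarith : (0:ℝ) ≤ B - A)]
  rw [ENNReal.toReal_ofReal (by linarith)]
  congr 1
  rw [hB]; ring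

lemma marginal_thetaStar (hp : ∀ e ∈ E, 0 ≤ p e ∧ p e ≤ 1) {e : V × V} (he : e ∈ E) :
    (∑ c : Finset (V × V), if e ∈ c then thetaStar E p S c else 0) = p e := by
  classical
  rw [← Finset.sum_filter, sum_thetaStar_filter (fun c => e ∈ c)]
  have hA0 : (0:ℝ) ≤ blockLo E p S e := le_max_left _ _
  have hAp : blockLo E p S e ≤ p e := by
    apply max_le (hp e he).1
    have := extPi_le_one E p S hp e.1
    linarith
  have hB1 : blockLo E p S e + (1 - p e) ≤ 1 := by
    have := (hp e he).1; linarith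
  rw [show {q : ℝ | e ∈ live2 E p S q} =
      (Set.Icc (blockLo E p S e) (blockLo E p S e + (1 - p e)))ᶜ from liveSet_eq he]
  exact volume_live_inter hA0 hB1 (hp e he).1 (hp e he).2

end Theta2

section Theta3
variable {E : Finset (V × V)} {p : V × V → ℝ} {S : Finset V}
open MeasureTheory

lemma memTheta_thetaStar (hp : ∀ e ∈ E, 0 ≤ p e ∧ p e ≤ 1) :
    memTheta E p (thetaStar E p S) := by
  refine ⟨fun c => ENNReal.toReal_nonneg, fun c hc => ?_, sum_thetaStar, ?_⟩
  · have : (Aset E p S c).Nonempty := by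
      by_contra h
      rw [Set.not_nonempty_iff_eq_empty] at h
      apply hc
      rw [thetaStar, h, measure_empty]
      rfl
    obtain ⟨q, _, hq⟩ := this
    rw [← hq]
    exact live2_sub q
  · intro e he
    exact marginal_thetaStar hp he

lemma expInf_thetaStar :
    expInf (thetaStar E p S) S = ∫ q in Set.Ioc (0:ℝ) 1, (R (live2 E p S q) S : ℝ) := by
  classical
  have hstep : ∀ q ∈ Set.Ioc (0:ℝ) 1,
      (R (live2 E p S q) S : ℝ) =
        ∑ c : Finset (V × V), (Aset E p S c).indicator (fun _ => (R c S : ℝ)) q := by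
    intro q hq
    rw [Finset.sum_eq_single (live2 E p S q)]
    · rw [Set.indicator_of_mem (show q ∈ Aset E p S (live2 E p S q) from ⟨hq, rfl⟩) ]
    · intro c _ hne
      apply Set.indicator_of_notMem
      rintro ⟨_, h⟩
      exact hne h.symm
    · intro h
      exact absurd (Finset.mem_univ _) h
  rw [setIntegral_congr_fun measurableSet_Ioc hstep]
  rw [integral_finset_sum _ (fun c _ => (integrable_const _).indicator (measurable_Aset c))]
  apply Finset.sum_congr rfl
  intro c _
  rw [setIntegral_indicator (measurable_Aset c)]
  have : Set.Ioc (0:ℝ) 1 ∩ Aset E p S c = Aset E p S c :=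
    Set.inter_eq_right.2 (Aset_subset c)
  rw [this, setIntegral_const, thetaStar, smul_eq_mul]
  rfl

end Theta3

section Lower
variable {E : Finset (V × V)} {p : V × V → ℝ} {S : Finset V} {θ : Finset (V × V) → ℝ}

lemma prob_mono (h0 : ∀ c, 0 ≤ θ c) {A B : Finset (V × V) → Prop}
    (h : ∀ c, A c → B c) : prob θ A ≤ prob θ B := by
  classical
  apply Finset.sum_le_sum
  intro c _
  by_cases hA : A c
  · rw [if_pos hA, if_pos (h c hA)]
  · rw [if_neg hA]
    by_cases hB : B c
    · rw [if_pos hB]; exact h0 c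
    · rw [if_neg hB]

lemma reach_of_edges {w : Finset (V × V)} :
    ∀ (γ : List V) (a b : V), γ.head? = some a → γ.getLast? = some b →
      (∀ e ∈ pathEdges γ, e ∈ w) →
      Relation.ReflTransGen (fun x y : V => (x, y) ∈ w) a b
  | [], a, b, ha, _, _ => by simp at ha
  | [x], a, b, ha, hb, _ => by
      simp at ha hb; subst ha; subst hb; exact Relation.ReflTransGen.refl
  | x :: y :: t, a, b, ha, hb, hall => by
      have hxa : a = x := by simpa using ha.symm
      subst hxa
      have h1 : (a, y) ∈ w := hall (a, y) (by rw [pathEdges_cons]; exact List.mem_cons_self)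
      have h2 := reach_of_edges (y :: t) y b rfl
        (by rw [← hb]; exact (List.getLast?_cons_cons ..).symm)
        (fun e he => hall e (by rw [pathEdges_cons]; exact List.mem_cons_of_mem _ he))
      exact Relation.ReflTransGen.head h1 h2

lemma prob_not_mem (hθ : memTheta E p θ) {e : V × V} (he : e ∈ E) :
    prob θ (fun c => e ∉ c) = 1 - p e := by
  classical
  obtain ⟨h0, hsup, hsum, hmarg⟩ := hθ
  have h : ∀ c : Finset (V × V), (if e ∉ c then θ c else 0)
      = θ c - (if e ∈ c then θ c else 0) := by
    intro c
    by_cases hc : e ∈ c <;> simp [hc]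
  rw [prob]
  trans (∑ c : Finset (V × V), (θ c - if e ∈ c then θ c else 0))
  · exact Finset.sum_congr rfl fun c _ => by by_cases hc : e ∈ c <;> simp [hc]
  · rw [Finset.sum_sub_distrib, hsum]
    linarith [hmarg e he]

lemma prob_all_ge (hθ : memTheta E p θ) :
    ∀ l : List (V × V), (∀ e ∈ l, e ∈ E) →
      1 - (l.map (fun e => 1 - p e)).sum ≤ prob θ (fun c => ∀ e ∈ l, e ∈ c)
  | [], _ => by
      simp only [List.map_nil, List.sum_nil, sub_zero]
      have : prob θ (fun c => ∀ e ∈ ([] : List (V × V)), e ∈ c) =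
          ∑ c : Finset (V × V), θ c := by
        apply Finset.sum_congr rfl
        intro c _
        rw [if_pos (by simp)]
      rw [this, hθ.2.2.1]
  | e :: t, hl => by
      classical
      have ht := prob_all_ge hθ t (fun x hx => hl x (List.mem_cons_of_mem _ hx))
      have hsplit : prob θ (fun c => ∀ x ∈ t, x ∈ c) ≤
          prob θ (fun c => ∀ x ∈ e :: t, x ∈ c) + prob θ (fun c => e ∉ c) := by
        rw [prob, prob, prob, ← Finset.sum_add_distrib]
        apply Finset.sum_le_sum
        intro c _
        have h0 := hθ.1 c
        by_cases h1 : ∀ x ∈ t, x ∈ c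
        · by_cases h2 : e ∈ c
          · have h3 : ∀ x ∈ e :: t, x ∈ c := by
              intro x hx
              rcases List.mem_cons.1 hx with rfl | hx
              · exact h2
              · exact h1 x hx
            rw [if_pos h1, if_pos h3, if_neg (by simp [h2])]
            linarith
          · rw [if_pos h1, if_pos (show e ∉ c from h2),
              if_neg (fun h3 => h2 (h3 e (List.mem_cons_self)))]
            linarith
        · rw [if_neg h1]
          exact add_nonneg (by split <;> first | exact h0 | exact le_rfl)
            (by split <;> first | exact h0 | exact le_rfl)
      have hne := prob_not_mem hθ (hl e (List.mem_cons_self))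
      rw [List.map_cons, List.sum_cons]
      rw [hne] at hsplit
      linarith

lemma piStar_le_prob (hp : ∀ e ∈ E, 0 ≤ p e ∧ p e ≤ 1) (hθ : memTheta E p θ) (i : V) :
    piStar E p S i ≤ prob θ (fun c => influenced c S i) := by
  classical
  apply csSup_le ⟨0, Set.mem_insert _ _⟩
  rintro x (rfl | ⟨γ, hγ, rfl⟩)
  · rw [prob]
    apply Finset.sum_nonneg
    intro c _
    by_cases h : influenced c S i
    · rw [if_pos h]; exact hθ.1 c
    · rw [if_neg h]
  · obtain ⟨hlen, ⟨s, hs, hhead⟩, hlast, hchain⟩ := hγ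
    have hedges : ∀ e ∈ pathEdges γ, e ∈ E := by
      intro e he
      have := chain'_pathEdges hchain e he
      simpa using this
    have h1 := prob_all_ge hθ (pathEdges γ) hedges
    have h2 : prob θ (fun c => ∀ e ∈ pathEdges γ, e ∈ c) ≤
        prob θ (fun c => influenced c S i) := by
      apply prob_mono hθ.1
      intro c hc
      exact ⟨s, hs, reach_of_edges γ s i hhead hlast hc⟩
    rw [L]
    linarith

lemma value_le_expInf (hp : ∀ e ∈ E, 0 ≤ p e ∧ p e ≤ 1) (hθ : memTheta E p θ) :
    (S.card : ℝ) + ∑ i ∈ Finset.univ \ S, piStar E p S i ≤ expInf θ S := by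
  classical
  have hR : expInf θ S = ∑ i : V, prob θ (fun c => influenced c S i) := by
    rw [expInf]
    have : ∀ c : Finset (V × V), θ c * (R c S : ℝ) =
        ∑ i : V, if influenced c S i then θ c else 0 := by
      intro c
      rw [R_eq_sum, Finset.mul_sum]
      apply Finset.sum_congr rfl
      intro i _
      by_cases h : influenced c S i <;> simp [h]
    rw [Finset.sum_congr rfl (fun c _ => this c), Finset.sum_comm]
    rfl
  rw [hR, ← Finset.sum_sdiff (Finset.subset_univ S)]
  have h1 : (S.card : ℝ) = ∑ i ∈ S, prob θ (fun c => influenced c S i) := by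
    have heq : ∀ i ∈ S, prob θ (fun c => influenced c S i) = 1 := by
      intro i hi
      rw [prob]
      have h2 : ∀ c : Finset (V × V), (if influenced c S i then θ c else 0) = θ c := by
        intro c
        rw [if_pos (influenced_of_mem_seed hi c)]
      rw [Finset.sum_congr rfl (fun c _ => h2 c), hθ.2.2.1]
    rw [Finset.sum_congr rfl heq, Finset.sum_const, nsmul_eq_mul, mul_one]
  have h2 : ∑ i ∈ Finset.univ \ S, piStar E p S i ≤
      ∑ i ∈ Finset.univ \ S, prob θ (fun c => influenced c S i) :=
    Finset.sum_le_sum (fun i _ => piStar_le_prob hp hθ i)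
  linarith

end Lower

section Final
variable {E : Finset (V × V)} {p : V × V → ℝ} {S : Finset V}

lemma fcorr_eq (hp : ∀ e ∈ E, 0 ≤ p e ∧ p e ≤ 1) :
    fcorr E p S = (S.card : ℝ) + ∑ i ∈ Finset.univ \ S, piStar E p S i := by
  apply IsLeast.csInf_eq
  constructor
  · refine ⟨thetaStar E p S, memTheta_thetaStar hp, ?_⟩
    rw [expInf_thetaStar,
      integral_R hp live2_sub (fun q _ => live2_Hlive q) (live2_Hdead hp)]
  · rintro x ⟨θ, hθ, rfl⟩
    exact value_le_expInf hp hθ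

end Final

/-- with `q̃` uniform on `[0,1]`, the expected number of influenced
nodes of the random scenario `E(q̃)` equals the worst-case expected influence:
`∫_0^1 R(E(q), S) dq = |S| + ∑_{i ∈ V \ S} π*_i = f^corr(S)`. -/
theorem integral_influence_eq_fcorr (E : Finset (V × V)) (p : V × V → ℝ)
    (hp : ∀ e ∈ E, 0 ≤ p e ∧ p e ≤ 1) (S : Finset V) :
    (∫ q in (0:ℝ)..1, (R (liveEdges E p S q) S : ℝ)) =
        (S.card : ℝ) + ∑ i ∈ Finset.univ \ S, piStar E p S i ∧
      (∫ q in (0:ℝ)..1, (R (liveEdges E p S q) S : ℝ)) = fcorr E p S := by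
  have key : (∫ q in (0:ℝ)..1, (R (liveEdges E p S q) S : ℝ)) =
      (S.card : ℝ) + ∑ i ∈ Finset.univ \ S, piStar E p S i := by
    rw [intervalIntegral.integral_of_le (by norm_num : (0:ℝ) ≤ 1)]
    exact integral_R hp liveEdges_sub (liveEdges_Hlive hp) (liveEdges_Hdead hp)
  exact ⟨key, by rw [key, fcorr_eq hp]⟩

end CorrIM
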